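/- Let α, β, κ be orientation-preserving homeomorphisms of ℝ with α²βα²β²α⁻¹β² = id, μ := α⁻¹β⁻² = κ^q, q > 0, such that xκ > x for all x ∈ ℝ. Then xβ⁻² > xμ³ for all x ∈ ℝ. -/
import Mathlib

/-- Step (8) in Proposition "real": if `xκ > x` for all `x ∈ ℝ`, then
`xβ⁻² > xμ³` for all `x ∈ ℝ`. -/
theorem beta_inv_sq_dominates_mu_cubed (α β κ μ : ℝ ≃o ℝ) (q : ℤ) (hq : 0 < q)
    -- the relation α²βα²β²α⁻¹β² = 1, read as a right action
    (hrel : ∀ x : ℝ, β (β (α.symm (β (β (α (α (β (α (α x))))))))) = x)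
    -- μ = α⁻¹β⁻²
    (hμ : ∀ x : ℝ, μ x = β.symm (β.symm (α.symm x)))
    -- μ = κ^q
    (hμκ : ∀ x : ℝ, μ x = (κ ^ q) x)
    (hκpos : ∀ x : ℝ, x < κ x) :
    ∀ x : ℝ, (μ ^ 3) x < β.symm (β.symm x) := by
  -- μ is pointwise strictly above the identity
  have hκn : ∀ n : ℕ, ∀ x : ℝ, x ≤ (κ ^ n) x := by
    intro n
    induction n with
    | zero => intro x; simp
    | succ n ih =>
      intro x
      have h1 : (κ ^ (n + 1)) x = (κ ^ n) (κ x) := by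
        rw [pow_succ]; rfl
      rw [h1]
      exact le_trans (hκpos x).le (ih (κ x))
  have hμpos : ∀ x : ℝ, x < μ x := by
    intro x
    rw [hμκ]
    obtain ⟨n, rfl⟩ : ∃ n : ℕ, q = (n : ℤ) + 1 := by
      refine ⟨(q - 1).toNat, ?_⟩
      omega
    have h1 : (κ ^ ((n : ℤ) + 1)) x = (κ ^ n) (κ x) := by
      rw [show ((n : ℤ) + 1) = ((n + 1 : ℕ) : ℤ) by push_cast; ring,
        zpow_natCast, pow_succ]
      rfl
    rw [h1]
    exact lt_of_lt_of_le (hκpos x) (hκn n (κ x))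
  -- element forms of the hypotheses
  have hrelE : β * β * α⁻¹ * β * β * α * α * β * α * α = 1 := by
    ext x; exact hrel x
  have hμE : μ = β⁻¹ * β⁻¹ * α⁻¹ := by
    ext x; exact hμ x
  -- the relation rearranged: α²βα² = β⁻²αβ⁻²
  have E4 : α * α * β * α * α = β⁻¹ * β⁻¹ * α * β⁻¹ * β⁻¹ := by
    calc α * α * β * α * α
        = (β * β * α⁻¹ * β * β)⁻¹ * (β * β * α⁻¹ * β * β * α * α * β * α * α) := by
          group
      _ = (β * β * α⁻¹ * β * β)⁻¹ * 1 := by rw [hrelE]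
      _ = β⁻¹ * β⁻¹ * α * β⁻¹ * β⁻¹ := by group
  -- the key identity: α = μα²μα⁻³μα²μα⁻¹μ
  have E3 : α = μ * α * α * μ * α⁻¹ * α⁻¹ * α⁻¹ * μ * α * α * μ * α⁻¹ * μ := by
    calc α = (α * α * β * α * α) * (α⁻¹ * α⁻¹ * α⁻¹ * α⁻¹) * (α * α * β * α * α)
            * (α⁻¹ * α⁻¹ * β⁻¹ * β⁻¹ * α⁻¹) := by group
      _ = (β⁻¹ * β⁻¹ * α * β⁻¹ * β⁻¹) * (α⁻¹ * α⁻¹ * α⁻¹ * α⁻¹)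
            * (β⁻¹ * β⁻¹ * α * β⁻¹ * β⁻¹) * (α⁻¹ * α⁻¹ * β⁻¹ * β⁻¹ * α⁻¹) := by
          rw [E4]
      _ = μ * α * α * μ * α⁻¹ * α⁻¹ * α⁻¹ * μ * α * α * μ * α⁻¹ * μ := by
          rw [hμE]; group
  -- pointwise form of E3
  have E3p : ∀ z : ℝ,
      α z = μ (α (α (μ (α.symm (α.symm (α.symm (μ (α (α (μ (α.symm (μ z)))))))))))) := by
    intro z
    conv_lhs => rw [E3]
    rfl
  intro x
  -- reduce the goal to μ(μ x) < α x
  have hrhs : β.symm (β.symm x) = μ (α x) := by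
    rw [hμ]; simp
  have hlhs : (μ ^ 3) x = μ (μ (μ x)) := by
    rw [pow_succ, pow_succ, pow_one]; rfl
  rw [hrhs, hlhs]
  refine μ.lt_iff_lt.mpr ?_
  set t := μ x with ht
  calc μ t = μ (α (α (α.symm (α.symm t)))) := by simp
    _ < μ (α (α (μ (α.symm (α.symm t))))) :=
        μ.lt_iff_lt.mpr (α.lt_iff_lt.mpr (α.lt_iff_lt.mpr (hμpos _)))
    _ = μ (α (α (μ (α.symm (α.symm (α.symm (α t))))))) := by simp
    _ < μ (α (α (μ (α.symm (α.symm (α.symm (μ (α t)))))))) :=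
        μ.lt_iff_lt.mpr (α.lt_iff_lt.mpr (α.lt_iff_lt.mpr (μ.lt_iff_lt.mpr
          (α.symm.lt_iff_lt.mpr (α.symm.lt_iff_lt.mpr (α.symm.lt_iff_lt.mpr
            (hμpos _)))))))
    _ = μ (α (α (μ (α.symm (α.symm (α.symm (μ (α (α (α.symm t)))))))))) := by
        simp
    _ < μ (α (α (μ (α.symm (α.symm (α.symm (μ (α (α (μ (α.symm t)))))))))) ) :=
        μ.lt_iff_lt.mpr (α.lt_iff_lt.mpr (α.lt_iff_lt.mpr (μ.lt_iff_lt.mpr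
          (α.symm.lt_iff_lt.mpr (α.symm.lt_iff_lt.mpr (α.symm.lt_iff_lt.mpr
            (μ.lt_iff_lt.mpr (α.lt_iff_lt.mpr (α.lt_iff_lt.mpr
              (hμpos _))))))))))
    _ = α x := (E3p x).symm
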